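/- arXiv:2011.04236 — 13 statements merged into one kernel-verified Lean document; each statement's English description precedes it below -/
import Mathlib

section
/- Let S be a finite semigroup that is locally idempotent (i.e., for every idempotent e, the subsemigroup eSe satisfies x² = x) and suppose that for every idempotent u the subsemigroup uSu satisfies the identity xyx = xy. Then for any idempotents e, i in S with ie = e and ei = i that have a common right unit f (i.e., an idempotent f with ef = e and if = i), we have e = i. -/
def RightAction {Q S : Type*} [Semigroup S] (act : Q → S → Q) : Prop :=
  ∀ (q : Q) (s t : S), act (act q s) t = act q (s * t)

def Reach {Q S : Type*} (act : Q → S → Q) (x y : Q) : Prop :=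
  x = y ∨ ∃ t : S, act x t = y

def LocIdem (S : Type*) [Semigroup S] : Prop :=
  ∀ e s : S, e * e = e → (e * s * e) * (e * s * e) = e * s * e

def LocXYXeqXY (S : Type*) [Semigroup S] : Prop :=
  ∀ e a b : S, e * e = e →
    (e * a * e) * (e * b * e) * (e * a * e) = (e * a * e) * (e * b * e)

def LocXYXeqYX (S : Type*) [Semigroup S] : Prop :=
  ∀ e a b : S, e * e = e →
    (e * a * e) * (e * b * e) * (e * a * e) = (e * b * e) * (e * a * e)

theorem stmt0 {S : Type*} [Semigroup S] [Fintype S]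
    (hli : LocIdem S) (hloc : LocXYXeqXY S)
    (e i f : S) (he : e * e = e) (hi : i * i = i) (hf : f * f = f)
    (hie : i * e = e) (hei : e * i = i) (hef : e * f = e) (hif : i * f = i) :
    e = i := by
  have A : f * e * (f * i) = f * i := by
    rw [mul_assoc f e, ← mul_assoc e f i, hef, hei]
  have B : f * i * (f * e) = f * e := by
    rw [mul_assoc f i, ← mul_assoc i f e, hif, hie]
  have h1 := hloc f e i hf
  rw [mul_assoc f e f, hef, mul_assoc f i f, hif] at h1
  have C : f * e * (f * e) = f * e := by
    rw [mul_assoc f e, ← mul_assoc e f e, hef, he]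
  rw [mul_assoc (f * e) (f * i) (f * e), B, A, C] at h1
  -- h1 : f * e = f * i
  have h2 : e * (f * e) = e * (f * i) := by rw [h1]
  rw [← mul_assoc e f e, ← mul_assoc e f i, hef, he, hei] at h2
  exact h2
end

section
/- Let S be a finite locally idempotent semigroup. If for some idempotent u the subsemigroup uSu does not satisfy the identity xyx = xy, then there exist two distinct idempotents e, i in S with i·e = e and e·i = i that have a common right unit in S. -/
theorem stmt1 {S : Type*} [Semigroup S] [Fintype S]
    (hli : LocIdem S) (u a b : S) (hu : u * u = u)
    (h : (u * a * u) * (u * b * u) * (u * a * u) ≠ (u * a * u) * (u * b * u)) :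
    ∃ e i f : S, e ≠ i ∧ e * e = e ∧ i * i = i ∧ i * e = e ∧ e * i = i ∧
      f * f = f ∧ e * f = e ∧ i * f = i := by
  have hu' : ∀ t : S, u * (u * t) = u * t := fun t => by rw [← mul_assoc, hu]
  set x := u * a * u with hxdef
  set y := u * b * u with hydef
  have hx : x * x = x := hli u a hu
  have hxyeq : x * y = u * (a * u * b) * u := by
    simp only [hxdef, hydef, mul_assoc, hu']
  have hxy : (x * y) * (x * y) = x * y := by
    rw [hxyeq]; exact hli u (a * u * b) hu
  have hieq : x * y * x = u * (a * u * b * u * a) * u := by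
    simp only [hxdef, hydef, mul_assoc, hu']
  have hii : (x * y * x) * (x * y * x) = x * y * x := by
    rw [hieq]; exact hli u (a * u * b * u * a) hu
  refine ⟨x * y, x * y * x, u, ?_, hxy, hii, ?_, ?_, hu, ?_, ?_⟩
  · exact fun he => h he.symm
  · -- (x*y*x)*(x*y) = x*y
    calc (x * y * x) * (x * y) = (x * y) * ((x * x) * y) := by
          simp only [mul_assoc]
      _ = (x * y) * (x * y) := by rw [hx]
      _ = x * y := hxy
  · -- (x*y)*(x*y*x) = x*y*x
    calc (x * y) * (x * y * x) = ((x * y) * (x * y)) * x := by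
          simp only [mul_assoc]
      _ = x * y * x := by rw [hxy]
  · -- (x*y)*u = x*y
    have : y * u = y := by rw [hydef, mul_assoc, hu]
    rw [mul_assoc, this]
  · -- (x*y*x)*u = x*y*x
    have : x * u = x := by rw [hxdef, mul_assoc, hu]
    rw [mul_assoc, this]
end

section
/- Let S be a finite locally idempotent semigroup. Then S satisfies the identity xyx = xy locally (i.e., in every subsemigroup eSe for idempotent e) if and only if no two distinct idempotents e, i with i·e = e and e·i = i have a common right unit in S. -/
theorem stmt2 {S : Type*} [Semigroup S] [Fintype S] (hli : LocIdem S) :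
    LocXYXeqXY S ↔
      ¬ ∃ e i f : S, e ≠ i ∧ e * e = e ∧ i * i = i ∧ i * e = e ∧ e * i = i ∧
        f * f = f ∧ e * f = e ∧ i * f = i := by
  constructor
  · rintro hxy ⟨e, i, f, hne, he, hi, hie, hei, hf, hef, hif⟩
    have L1 : ∀ t : S, e * (f * t) = e * t := fun t => by rw [← mul_assoc, hef]
    have L2 : ∀ t : S, i * (f * t) = i * t := fun t => by rw [← mul_assoc, hif]
    have L3 : ∀ t : S, e * (e * t) = e * t := fun t => by rw [← mul_assoc, he]
    have L4 : ∀ t : S, i * (e * t) = e * t := fun t => by rw [← mul_assoc, hie]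
    have L5 : ∀ t : S, e * (i * t) = i * t := fun t => by rw [← mul_assoc, hei]
    have L6 : ∀ t : S, i * (i * t) = i * t := fun t => by rw [← mul_assoc, hi]
    have key := hxy f e i hf
    have key2 := congrArg (fun t => e * t) key
    simp only [mul_assoc] at key2
    simp only [L1, L2, L3, L4, L5, L6, hef, hif, he, hie, hei, hi] at key2
    exact hne key2
  · intro h g a b hg
    by_contra hne
    have hgg : ∀ t : S, g * (g * t) = g * t := fun t => by rw [← mul_assoc, hg]
    set x := g * a * g with hx
    set y := g * b * g with hy
    refine h ⟨x * y, x * y * x, g, ?_, ?_, ?_, ?_, ?_, hg, ?_, ?_⟩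
    · exact fun hh => hne hh.symm
    · have := hli g (a * (g * b)) hg
      simp only [hx, hy, mul_assoc, hgg, hg] at this ⊢
      exact this
    · have := hli g (a * (g * (b * (g * a)))) hg
      simp only [hx, hy, mul_assoc, hgg, hg] at this ⊢
      exact this
    · -- (x*y*x) * (x*y) = x*y
      have hxx : x * x = x := by
        have := hli g a hg
        simp only [hx, mul_assoc, hgg, hg] at this ⊢
        exact this
      have hee : (x * y) * (x * y) = x * y := by
        have := hli g (a * (g * b)) hg
        simp only [hx, hy, mul_assoc, hgg, hg] at this ⊢
        exact this
      calc x * y * x * (x * y) = x * y * (x * x) * y := by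
            simp only [mul_assoc]
        _ = x * y * x * y := by rw [hxx]
        _ = (x * y) * (x * y) := by simp only [mul_assoc]
        _ = x * y := hee
    · -- (x*y) * (x*y*x) = x*y*x
      have hee : (x * y) * (x * y) = x * y := by
        have := hli g (a * (g * b)) hg
        simp only [hx, hy, mul_assoc, hgg, hg] at this ⊢
        exact this
      calc x * y * (x * y * x) = (x * y * (x * y)) * x := by
            simp only [mul_assoc]
        _ = x * y * x := by rw [hee]
    · -- (x*y) * g = x*y
      have hyg : y * g = y := by
        simp only [hy, mul_assoc, hg, hgg]
      rw [mul_assoc, hyg]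
    · -- (x*y*x) * g = x*y*x
      have hxg : x * g = x := by
        simp only [hx, mul_assoc, hg, hgg]
      rw [mul_assoc, hxg]
end

section
/- Let S be a finite locally idempotent semigroup. Then S satisfies the identity xyx = yx locally (in every eSe for idempotent e) if and only if no two distinct idempotents e, i with i·e = i and e·i = e have a common left unit in S (an idempotent f with f·e = e and f·i = i). -/
private lemma prodEE {S : Type*} [Semigroup S] (e s t : S) (he : e * e = e) :
    (e * s * e) * (e * t * e) = e * (s * e * t) * e := by
  simp only [mul_assoc]
  rw [← mul_assoc e e (t * e), he]

theorem stmt3 {S : Type*} [Semigroup S] [Fintype S] (hli : LocIdem S) :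
    LocXYXeqYX S ↔
      ¬ ∃ e i f : S, e ≠ i ∧ e * e = e ∧ i * i = i ∧ i * e = i ∧ e * i = e ∧
        f * f = f ∧ f * e = e ∧ f * i = i := by
  constructor
  · rintro H ⟨e, i, f, hne, he, hi, hie, hei, hf, hfe, hfi⟩
    have h1 := H f e i hf
    rw [hfe, hfi] at h1
    -- h1 : (e*f)*(i*f)*(e*f) = (i*f)*(e*f)
    have h2 : (e * f) * (i * f) = e * f := by
      rw [mul_assoc e f (i * f), ← mul_assoc f i f, hfi,
        ← mul_assoc e i f, hei]
    have h3 : (e * f) * (e * f) = e * f := by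
      rw [mul_assoc e f (e * f), ← mul_assoc f e f, hfe,
        ← mul_assoc e e f, he]
    have h4 : (i * f) * (e * f) = i * f := by
      rw [mul_assoc i f (e * f), ← mul_assoc f e f, hfe,
        ← mul_assoc i e f, hie]
    rw [h2, h3, h4] at h1
    -- h1 : e * f = i * f
    apply hne
    have h5 : (e * f) * e = (i * f) * e := by rw [h1]
    rw [mul_assoc, hfe, he, mul_assoc, hfe, hie] at h5
    exact h5
  · intro h e a b he
    set x := e * a * e with hxd
    set y := e * b * e with hyd
    have hx : x * x = x := hli e a he
    have hy : y * y = y := hli e b he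
    have hyx : y * x = e * (b * e * a) * e := prodEE e b a he
    have hE : (y * x) * (y * x) = y * x := by
      rw [hyx]; exact hli e (b * e * a) he
    have hxy : x * y = e * (a * e * b) * e := prodEE e a b he
    have hxyx : x * y * x = e * (a * e * b * e * a) * e := by
      rw [hxy, prodEE e (a * e * b) a he]
    have hI : (x * y * x) * (x * y * x) = x * y * x := by
      rw [hxyx]; exact hli e (a * e * b * e * a) he
    have hex : e * x = x := by
      rw [hxd, ← mul_assoc, ← mul_assoc, he]
    have hey : e * y = y := by
      rw [hyd, ← mul_assoc, ← mul_assoc, he]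
    have heE : e * (y * x) = y * x := by rw [← mul_assoc, hey]
    have heI : e * (x * y * x) = x * y * x := by
      rw [← mul_assoc e (x * y) x, ← mul_assoc e x y, hex]
    have hIE : (x * y * x) * (y * x) = x * y * x := by
      calc (x * y * x) * (y * x) = x * ((y * x) * (y * x)) := by
            simp only [mul_assoc]
        _ = x * (y * x) := by rw [hE]
        _ = x * y * x := (mul_assoc x y x).symm
    have hEI : (y * x) * (x * y * x) = y * x := by
      calc (y * x) * (x * y * x) = y * ((x * x) * (y * x)) := by
            simp only [mul_assoc]
        _ = y * (x * (y * x)) := by rw [hx]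
        _ = (y * x) * (y * x) := by simp only [mul_assoc]
        _ = y * x := hE
    by_contra hne
    exact h ⟨y * x, x * y * x, e, fun hq => hne hq.symm, hE, hI, hIE, hEI, he, heE, heI⟩
end

section
/- Let S be a finite semigroup of transformations acting on a finite set Q (the transition semigroup of a DFA). Suppose S is locally idempotent. Let p, q ∈ Q be such that there is an idempotent e ∈ S with p·e = p and q·e = q, and let s ∈ S be such that q is reachable from p·s (i.e., p·s·b = q for some b ∈ S, or p·s = q). Then q is reachable from q·s. -/
theorem stmt5 {Q S : Type*} [Fintype Q] [Semigroup S] [Fintype S]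
    (act : Q → S → Q) (hact : RightAction act) (hli : LocIdem S)
    (p q : Q) (e : S) (he : e * e = e)
    (hpe : act p e = p) (hqe : act q e = q)
    (s : S) (h : Reach act (act p s) q) :
    Reach act (act q s) q := by
  rw [RightAction] at hact
  rcases h with h | ⟨b, hb⟩
  · -- act p s = q; use t = e
    set c := e * s * e with hc
    have hcc : c * c = c := hli e s he
    have hpc : act p c = q := by
      have : act p c = act (act (act (act p e) s) e) e := by
        simp only [hact, hc, mul_assoc, he]
      rw [this, hpe, h, hqe, hqe]
    have hqc : act q c = q := by
      rw [← hpc, hact, hcc, hpc]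
    right
    refine ⟨e, ?_⟩
    have : act (act q s) e = act (act q c) e := by
      conv_lhs => rw [← hqe]
      simp only [hact, hc, mul_assoc, he]
    rw [this, hqc, hqe]
  · -- act (act p s) b = q; use t = b * e
    set c := e * (s * b) * e with hc
    have hcc : c * c = c := hli e (s * b) he
    have hpc : act p c = q := by
      have : act p c = act (act (act (act p e) (s * b)) e) e := by
        simp only [hact, hc, mul_assoc, he]
      rw [this, hpe]
      rw [← hact, hb, hqe, hqe]
    have hqc : act q c = q := by
      rw [← hpc, hact, hcc, hpc]
    right
    refine ⟨b * e, ?_⟩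
    have : act (act q s) (b * e) = act (act q c) e := by
      conv_lhs => rw [← hqe]
      simp only [hact, hc, mul_assoc, he]
    rw [this, hqc, hqe]
end

section
/- Let S be a finite locally idempotent transformation semigroup acting on a finite set Q. Suppose p, q, r ∈ Q have a common right unit e (an idempotent with p·e = p, q·e = q, r·e = r), and there exists s ∈ S with p·s = q and q·s = r. Then r and q are in the same strongly connected component: q is reachable from r and r is reachable from q. -/
theorem stmt6 {Q S : Type*} [Fintype Q] [Semigroup S] [Fintype S]
    (act : Q → S → Q) (hact : RightAction act) (hli : LocIdem S)
    (p q r : Q) (e : S) (he : e * e = e)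
    (hpe : act p e = p) (hqe : act q e = q) (hre : act r e = r)
    (s : S) (hps : act p s = q) (hqs : act q s = r) :
    Reach act r q ∧ Reach act q r := by
  set f := e * s * e with hfdef
  have hf : f * f = f := hli e s he
  have hpf : act p f = q := by
    have : act p f = act p (e * (s * e)) := by rw [hfdef, mul_assoc]
    rw [this, ← hact, hpe, ← hact, hps, hqe]
  have hqf : act q f = r := by
    have : act q f = act q (e * (s * e)) := by rw [hfdef, mul_assoc]
    rw [this, ← hact, hqe, ← hact, hqs, hre]
  have hqr : q = r := by
    have h1 : act p (f * f) = r := by rw [← hact, hpf, hqf]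
    rw [hf, hpf] at h1
    exact h1
  subst hqr
  exact ⟨Or.inl rfl, Or.inl rfl⟩
end

section
/- Let S be the finite transition semigroup of a DFA acting on state set Q. Then S is locally idempotent if and only if the following three conditions hold: (1) there is no pair of distinct states p, q and s ∈ S with p·s = q and q·s = p; (2) for every pair (p,q) having a common right unit e and every s ∈ S, if q is reachable from p·s then q is reachable from q·s; (3) there is no triple of pairwise distinct states p, q, r having a common right unit and an s ∈ S with p·s = q and q·s = r. -/
/-- `spow s n = s ^ (n+1)` for a semigroup. -/
private def spow {S : Type*} [Semigroup S] (s : S) : ℕ → S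
  | 0 => s
  | n + 1 => spow s n * s

private lemma spow_mul_spow {S : Type*} [Semigroup S] (s : S) (m n : ℕ) :
    spow s m * spow s n = spow s (m + n + 1) := by
  induction n with
  | zero => rfl
  | succ n ih =>
    show spow s m * (spow s n * s) = spow s (m + n + 1) * s
    rw [← mul_assoc, ih]

private lemma exists_spow_idem {S : Type*} [Semigroup S] [Finite S] (s : S) :
    ∃ e : S, e * e = e ∧ ∃ n : ℕ, spow s n = e := by
  obtain ⟨x, y, hxy, hfe⟩ := Finite.exists_ne_map_eq_of_infinite (spow s)
  obtain ⟨a, d, hd, hrep⟩ : ∃ a d, 0 < d ∧ spow s (a + d) = spow s a := by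
    rcases lt_or_gt_of_ne hxy with h | h
    · exact ⟨x, y - x, by omega, by rw [Nat.add_sub_cancel' h.le, ← hfe]⟩
    · exact ⟨y, x - y, by omega, by rw [Nat.add_sub_cancel' h.le, hfe]⟩
  have step : ∀ B, a ≤ B → spow s (B + d) = spow s B := by
    intro B hB
    rcases Nat.exists_eq_add_of_le hB with ⟨c, rfl⟩
    cases c with
    | zero => simpa using hrep
    | succ c =>
      have h1 : spow s (a + d) * spow s c = spow s (a + d + c + 1) := spow_mul_spow ..
      have h2 : spow s a * spow s c = spow s (a + c + 1) := spow_mul_spow ..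
      have he : a + (c + 1) + d = a + d + c + 1 := by ring
      have he2 : a + (c + 1) = a + c + 1 := by ring
      rw [he, ← h1, hrep, h2, he2]
  have steps : ∀ k B, a ≤ B → spow s (B + k * d) = spow s B := by
    intro k
    induction k with
    | zero => simp
    | succ k ih =>
      intro B hB
      have h : B + (k + 1) * d = (B + k * d) + d := by ring
      rw [h, step _ (by omega), ih B hB]
  have hm : a + 1 ≤ (a + 1) * d := Nat.le_mul_of_pos_right (a + 1) hd
  set m := (a + 1) * d with hmdef
  refine ⟨spow s (m - 1), ?_, m - 1, rfl⟩
  rw [spow_mul_spow]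
  have h : (m - 1) + (m - 1) + 1 = (m - 1) + (a + 1) * d := by rw [← hmdef]; omega
  rw [h]
  exact steps (a + 1) (m - 1) (by omega)

theorem stmt8 {Q S : Type*} [Fintype Q] [Semigroup S] [Fintype S]
    (act : Q → S → Q) (hact : RightAction act)
    (hfaith : ∀ s t : S, (∀ q : Q, act q s = act q t) → s = t) :
    LocIdem S ↔
      ((¬ ∃ (p q : Q) (s : S), p ≠ q ∧ act p s = q ∧ act q s = p) ∧
       (∀ (p q : Q) (e : S), e * e = e → act p e = p → act q e = q →
          ∀ s : S, Reach act (act p s) q → Reach act (act q s) q) ∧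
       (¬ ∃ (p q r : Q) (e s : S), p ≠ q ∧ q ≠ r ∧ p ≠ r ∧
          e * e = e ∧ act p e = p ∧ act q e = q ∧ act r e = r ∧
          act p s = q ∧ act q s = r)) := by
  constructor
  · intro hLI
    refine ⟨?_, ?_, ?_⟩
    · -- no 2-cycles
      rintro ⟨p, q, s, hpq, hps, hqs⟩
      obtain ⟨e, hee, n, hne⟩ := exists_spow_idem s
      have swap : ∀ n : ℕ,
          (act p (spow s n) = q ∧ act q (spow s n) = p) ∨
          (act p (spow s n) = p ∧ act q (spow s n) = q) := by
        intro n
        induction n with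
        | zero => exact Or.inl ⟨hps, hqs⟩
        | succ n ih =>
          have hp' : act p (spow s (n + 1)) = act (act p (spow s n)) s :=
            (hact p (spow s n) s).symm
          have hq' : act q (spow s (n + 1)) = act (act q (spow s n)) s :=
            (hact q (spow s n) s).symm
          rcases ih with ⟨h1, h2⟩ | ⟨h1, h2⟩
          · exact Or.inr ⟨by rw [hp', h1, hqs], by rw [hq', h2, hps]⟩
          · exact Or.inl ⟨by rw [hp', h1, hps], by rw [hq', h2, hqs]⟩
      rcases swap n with ⟨h1, h2⟩ | ⟨h1, h2⟩
      · -- e swaps p and q, but e is idempotent: contradiction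
        rw [hne] at h1 h2
        have : act (act p e) e = act p (e * e) := hact p e e
        rw [hee, h1, h2] at this
        exact hpq this
      · -- e fixes p and q; use local idempotency of e*s*e
        rw [hne] at h1 h2
        have htt := hLI e s hee
        have hA : act p (e * s * e) = q := by
          rw [← hact p (e * s) e, ← hact p e s, h1, hps, h2]
        have hB : act q (e * s * e) = p := by
          rw [← hact q (e * s) e, ← hact q e s, h2, hqs, h1]
        have : act p ((e * s * e) * (e * s * e)) = p := by
          rw [← hact p (e * s * e) (e * s * e), hA, hB]
        rw [htt, hA] at this
        exact hpq this.symm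
    · -- condition (2)
      intro p q e hee hpe hqe s hreach
      rcases hreach with heq | ⟨u, hu⟩
      · -- act p s = q ; use t = e*s*e
        have htt := hLI e s hee
        have hA : act p (e * s * e) = q := by
          rw [← hact p (e * s) e, ← hact p e s, hpe, heq, hqe]
        have hqt : act q (e * s * e) = q := by
          have h := hact p (e * s * e) (e * s * e)
          rw [hA, htt, hA] at h
          exact h
        have hqt2 : act q (e * s * e) = act (act q s) e := by
          rw [← hact q (e * s) e, ← hact q e s, hqe]
        exact Or.inr ⟨e, by rw [← hqt2]; exact hqt⟩
      · -- act (act p s) u = q ; use t = e*(s*u)*e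
        have hpsu : act p (s * u) = q := by rw [← hact p s u, hu]
        have htt := hLI e (s * u) hee
        have hA : act p (e * (s * u) * e) = q := by
          rw [← hact p (e * (s * u)) e, ← hact p e (s * u), hpe, hpsu, hqe]
        have hqt : act q (e * (s * u) * e) = q := by
          have h := hact p (e * (s * u) * e) (e * (s * u) * e)
          rw [hA, htt, hA] at h
          exact h
        have hqt2 : act q (e * (s * u) * e) = act (act q s) (u * e) := by
          rw [← hact q (e * (s * u)) e, ← hact q e (s * u), hqe, ← hact q s u,
            hact (act q s) u e]
        exact Or.inr ⟨u * e, by rw [← hqt2]; exact hqt⟩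
    · -- no 3-chains
      rintro ⟨p, q, r, e, s, hpq, hqr, hpr, hee, hpe, hqe, hre, hps, hqs⟩
      have htt := hLI e s hee
      have hA : act p (e * s * e) = q := by
        rw [← hact p (e * s) e, ← hact p e s, hpe, hps, hqe]
      have hB : act q (e * s * e) = r := by
        rw [← hact q (e * s) e, ← hact q e s, hqe, hqs, hre]
      have h := hact p (e * s * e) (e * s * e)
      rw [hA, hB, htt, hA] at h
      exact hqr h.symm
  · rintro ⟨h1, _, h3⟩ e s hee
    set t := e * s * e with ht
    have het : e * t = t := by rw [ht, ← mul_assoc, ← mul_assoc, hee]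
    have hte : t * e = t := by rw [ht, mul_assoc (e * s) e e, hee]
    apply hfaith
    intro q
    set p0 := act q e with hp0
    set p1 := act p0 t with hp1
    set p2 := act p1 t with hp2
    have hp0e : act p0 e = p0 := by rw [hp0, hact q e e, hee]
    have hp1e : act p1 e = p1 := by rw [hp1, hact p0 t e, hte]
    have hp2e : act p2 e = p2 := by rw [hp2, hact p1 t e, hte]
    have hqt : act q t = p1 := by rw [hp1, hp0, hact q e t, het]
    have hqtt : act q (t * t) = p2 := by
      rw [← hact q t t, hqt, hp2]
    rw [hqtt, hqt]
    -- show p2 = p1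
    by_cases h01 : p0 = p1
    · rw [hp2, ← h01, ← hp1, h01]
    by_cases h12 : p1 = p2
    · exact h12.symm
    by_cases h02 : p0 = p2
    · exact absurd ⟨p0, p1, t, h01, hp1.symm, by rw [← hp2, h02]⟩ h1
    · exact absurd ⟨p0, p1, p2, e, t, h01, h12, h02, hee, hp0e, hp1e, hp2e,
        hp1.symm, hp2.symm⟩ h3
end

section
/- Let S be the finite transition semigroup of a DFA acting on state set Q. Then S is right locally testable (locally idempotent and locally satisfying xyx = xy) if and only if: (1) for every pair of states p, q with a common right unit, if p and q are mutually reachable then p = q; and (2) for every pair (p,q) with a common right unit and every s ∈ S, if q is reachable from p·s then q is reachable from q·s. -/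
private lemma ee_mul {S : Type*} [Semigroup S] {e : S} (he : e * e = e) (x : S) :
    e * (e * x) = e * x := by rw [← mul_assoc, he]

private lemma aux_idem {Q S : Type*} [Semigroup S] (act : Q → S → Q)
    (hact : RightAction act)
    (h1 : ∀ (p q : Q) (e : S), e * e = e → act p e = p → act q e = q →
        Reach act p q → Reach act q p → p = q)
    (h2 : ∀ (p q : Q) (e : S), e * e = e → act p e = p → act q e = q →
        ∀ s : S, Reach act (act p s) q → Reach act (act q s) q)
    {e x : S} (he : e * e = e) (hex : e * x = x) (hxe : x * e = x) (q : Q) :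
    act (act q x) x = act q x := by
  have hpe : act (act q e) e = act q e := by rw [hact, he]
  have hq1e : act (act q x) e = act q x := by rw [hact, hxe]
  have hr : Reach act (act (act q e) x) (act q x) := Or.inl (by rw [hact, hex])
  have hr2 := h2 (act q e) (act q x) e he hpe hq1e x hr
  have hq2e : act (act (act q x) x) e = act (act q x) x := by rw [hact, hxe]
  exact h1 _ _ e he hq2e hq1e hr2 (Or.inr ⟨x, rfl⟩)

private lemma aux_xyx {Q S : Type*} [Semigroup S] (act : Q → S → Q)
    (hact : RightAction act)
    (h1 : ∀ (p q : Q) (e : S), e * e = e → act p e = p → act q e = q →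
        Reach act p q → Reach act q p → p = q)
    (h2 : ∀ (p q : Q) (e : S), e * e = e → act p e = p → act q e = q →
        ∀ s : S, Reach act (act p s) q → Reach act (act q s) q)
    {e x y : S} (he : e * e = e) (hxx : x * x = x) (hxe : x * e = x)
    (hye : y * e = y) (q : Q) :
    act (act (act q x) y) x = act (act q x) y := by
  have hq1e : act (act q x) e = act q x := by rw [hact, hxe]
  have hq2e : act (act (act q x) y) e = act (act q x) y := by rw [hact, hye]
  have hr : Reach act (act (act q x) x) (act (act q x) y) := by
    rw [hact, hxx]; exact Or.inr ⟨y, rfl⟩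
  have hr2 := h2 (act q x) (act (act q x) y) e he hq1e hq2e x hr
  have hq3e : act (act (act (act q x) y) x) e = act (act (act q x) y) x := by
    rw [hact, hxe]
  exact h1 _ _ e he hq3e hq2e hr2 (Or.inr ⟨x, rfl⟩)

theorem stmt10 {Q S : Type*} [Fintype Q] [Semigroup S] [Fintype S]
    (act : Q → S → Q) (hact : RightAction act)
    (hfaith : ∀ s t : S, (∀ q : Q, act q s = act q t) → s = t) :
    (LocIdem S ∧ LocXYXeqXY S) ↔
      ((∀ (p q : Q) (e : S), e * e = e → act p e = p → act q e = q →
          Reach act p q → Reach act q p → p = q) ∧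
       (∀ (p q : Q) (e : S), e * e = e → act p e = p → act q e = q →
          ∀ s : S, Reach act (act p s) q → Reach act (act q s) q)) := by
  constructor
  · rintro ⟨hid, hxyx⟩
    constructor
    · rintro p q e he hpe hqe hpq hqp
      rcases hpq with rfl | ⟨t, ht⟩
      · rfl
      rcases hqp with h | ⟨u, hu⟩
      · exact h.symm
      · -- ht : act p t = q, hu : act q u = p
        have het : act p (e * t) = q := by rw [← hact, hpe, ht]
        have hx : act p (e * t * e) = q := by rw [← hact, het, hqe]
        have heu : act q (e * u) = p := by rw [← hact, hqe, hu]
        have hy : act q (e * u * e) = p := by rw [← hact, heu, hpe]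
        have hxy : act p ((e * t * e) * (e * u * e)) = p := by
          rw [← hact, hx, hy]
        have : q = p := by
          calc q = act p (e * t * e) := hx.symm
            _ = act (act p ((e * t * e) * (e * u * e))) (e * t * e) := by rw [hxy]
            _ = act p ((e * t * e) * (e * u * e) * (e * t * e)) := hact _ _ _
            _ = act p ((e * t * e) * (e * u * e)) := by rw [hxyx e t u he]
            _ = p := hxy
        exact this.symm
    · rintro p q e he hpe hqe s hreach
      rcases hreach with h | ⟨t, ht⟩
      · -- h : act p s = q
        have hes : act p (e * s) = q := by rw [← hact, hpe, h]
        have hw : act p (e * s * e) = q := by rw [← hact, hes, hqe]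
        have hww : (e * s * e) * (s * e) = e * s * e := by
          calc (e * s * e) * (s * e) = (e * s * e) * (e * s * e) := by
                simp only [mul_assoc, ee_mul he]
            _ = e * s * e := hid e s he
        refine Or.inr ⟨e, ?_⟩
        rw [hact q s e, ← hw, hact, hww]
      · -- ht : act (act p s) t = q
        have ht' : act p (s * t) = q := by rw [← hact]; exact ht
        have hes : act p (e * (s * t)) = q := by rw [← hact, hpe, ht']
        have hw : act p (e * (s * t) * e) = q := by rw [← hact, hes, hqe]
        have hww : (e * (s * t) * e) * (s * (t * e)) = e * (s * t) * e := by
          calc (e * (s * t) * e) * (s * (t * e))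
              = (e * (s * t) * e) * (e * (s * t) * e) := by
                simp only [mul_assoc, ee_mul he]
            _ = e * (s * t) * e := hid e (s * t) he
        refine Or.inr ⟨t * e, ?_⟩
        rw [hact q s (t * e), ← hw, hact, hww]
  · rintro ⟨h1, h2⟩
    have hid : LocIdem S := by
      intro e s he
      apply hfaith
      intro q
      rw [← hact q (e * s * e) (e * s * e)]
      exact aux_idem act hact h1 h2 he
        (by rw [← mul_assoc, ← mul_assoc, he]) (by rw [mul_assoc, he]) q
    refine ⟨hid, ?_⟩
    intro e a b he
    apply hfaith
    intro q
    rw [← hact q ((e * a * e) * (e * b * e)) (e * a * e),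
        ← hact q (e * a * e) (e * b * e)]
    exact aux_xyx act hact h1 h2 he (hid e a he)
      (by rw [mul_assoc, he]) (by rw [mul_assoc, he]) q
end

section
/- Let S be the finite transition semigroup of a DFA acting on state set Q, and suppose S is left locally testable (locally idempotent and locally satisfying xyx = yx). Suppose p, q ∈ Q have a common right unit e (idempotent with p·e = p, q·e = q) and q is reachable from p. Then for every s ∈ S: q is reachable from p·s if and only if q is reachable from q·s. -/
theorem stmt11 {Q S : Type*} [Fintype Q] [Semigroup S] [Fintype S]
    (act : Q → S → Q) (hact : RightAction act)
    (hli : LocIdem S) (hloc : LocXYXeqYX S)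
    (p q : Q) (e : S) (he : e * e = e)
    (hpe : act p e = p) (hqe : act q e = q)
    (hreach : Reach act p q) :
    ∀ s : S, Reach act (act p s) q ↔ Reach act (act q s) q := by
  -- Forward direction, in existential form.
  have fwd : ∀ s' t : S, act p (s' * t) = q → Reach act (act q s') q := by
    intro s' t ht
    have hpw : act p (e * (s' * t) * e) = q := by
      rw [← hact, ← hact, hpe, ht, hqe]
    have hww : (e * (s' * t) * e) * (e * (s' * t) * e) = e * (s' * t) * e :=
      hli e (s' * t) he
    have hqw : act q (e * (s' * t) * e) = q := by
      rw [← hpw, hact, hww, hpw]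
    right
    refine ⟨t * e, ?_⟩
    have h1 : act q ((s' * t) * e) = q := by
      rw [mul_assoc e, ← hact, hqe] at hqw
      exact hqw
    rw [hact, ← mul_assoc]
    exact h1
  -- Backward direction, in existential form.
  have bwd : ∀ s' t : S, act q (s' * t) = q → Reach act (act p s') q := by
    intro s' t ht
    have hqa : act q (e * (s' * t) * e) = q := by
      rw [← hact, ← hact, hqe, ht, hqe]
    rcases hreach with h | ⟨u, hu⟩
    · right
      refine ⟨t * e, ?_⟩
      have h1 : act q ((s' * t) * e) = q := by
        rw [mul_assoc e, ← hact, hqe] at hqa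
        exact hqa
      rw [h, hact, ← mul_assoc]
      exact h1
    · have hpu' : act p (e * u * e) = q := by
        rw [← hact, ← hact, hpe, hu, hqe]
      have hx : (e * (s' * t) * e) * (e * u * e) * (e * (s' * t) * e)
          = (e * u * e) * (e * (s' * t) * e) := hloc e (s' * t) u he
      have hq1 : act p ((e * u * e) * (e * (s' * t) * e)) = q := by
        rw [← hact, hpu', hqa]
      have hq2 : act p ((e * (s' * t) * e) * (e * u * e) * (e * (s' * t) * e)) = q := by
        rw [hx]; exact hq1
      have hS : (e * (s' * t) * e) * (e * u * e) * (e * (s' * t) * e)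
          = e * (s' * (t * (e * ((e * u * e) * (e * (s' * t) * e))))) := by
        simp only [mul_assoc]
      rw [hS] at hq2
      rw [← hact, hpe] at hq2
      right
      refine ⟨t * (e * ((e * u * e) * (e * (s' * t) * e))), ?_⟩
      rw [hact]
      exact hq2
  intro s
  constructor
  · rintro (h | ⟨t, ht⟩)
    · exact fwd s e (by rw [← hact, h, hqe])
    · exact fwd s t (by rw [← hact]; exact ht)
  · rintro (h | ⟨t, ht⟩)
    · exact bwd s e (by rw [← hact, h, hqe])
    · exact bwd s t (by rw [← hact]; exact ht)
end

section
/- Let S be the finite transition semigroup of a DFA acting on state set Q, and suppose S is left locally testable. Suppose p, q, r ∈ Q have a common right unit (an idempotent e fixing all three), there exists s ∈ S with p·s = q and r·s = r, and there exists t ∈ S with p·t = r and q·t = q. Then r = q. -/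
theorem stmt12 {Q S : Type*} [Fintype Q] [Semigroup S] [Fintype S]
    (act : Q → S → Q) (hact : RightAction act)
    (hli : LocIdem S) (hloc : LocXYXeqYX S)
    (p q r : Q) (e : S) (he : e * e = e)
    (hpe : act p e = p) (hqe : act q e = q) (hre : act r e = r)
    (s : S) (hps : act p s = q) (hrs : act r s = r)
    (t : S) (hpt : act p t = r) (hqt : act q t = q) :
    r = q := by
  set f := e * s * e with hf
  set g := e * t * e with hg
  clear_value f g
  have actmul : ∀ (x : Q) (a b : S), act x (a * b) = act (act x a) b :=
    fun x a b => (hact x a b).symm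
  -- basic action facts
  have hpf : act p f = q := by
    rw [hf, actmul, actmul, hpe, hps, hqe]
  have hrf : act r f = r := by
    rw [hf, actmul, actmul, hre, hrs, hre]
  have hpg : act p g = r := by
    rw [hg, actmul, actmul, hpe, hpt, hre]
  have hqg : act q g = q := by
    rw [hg, actmul, actmul, hqe, hqt, hqe]
  -- f is idempotent, hence q·f = q
  have hff : f * f = f := by rw [hf]; exact hli e s he
  have hqf : act q f = q := by
    have h := actmul p f f
    rw [hff, hpf] at h
    exact h.symm
  -- f*g*f = g*f evaluated at p
  have hkey : f * g * f = g * f := by rw [hf, hg]; exact hloc e s t he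
  have h1 : act p (f * g * f) = q := by
    rw [actmul, actmul, hpf, hqg, hqf]
  have h2 : act p (g * f) = r := by
    rw [actmul, hpg, hrf]
  rw [hkey, h2] at h1
  exact h1
end

section
/- Let S be the finite transition semigroup of a DFA acting on state set Q. Then S is left locally testable if and only if: (1) S is locally idempotent; (2) for every pair p, q with a common right unit such that q is reachable from p, and every s ∈ S, q is reachable from p·s if and only if q is reachable from q·s; and (3) whenever p, q, r have a common right unit and there are s, t ∈ S with p·s = q, r·s = r, p·t = r, q·t = q (with s, t in eSe), then r = q. -/
theorem stmt13 {Q S : Type*} [Fintype Q] [Semigroup S] [Fintype S]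
    (act : Q → S → Q) (hact : RightAction act)
    (hfaith : ∀ s t : S, (∀ q : Q, act q s = act q t) → s = t) :
    (LocIdem S ∧ LocXYXeqYX S) ↔
      (LocIdem S ∧
       (∀ (p q : Q) (e : S), e * e = e → act p e = p → act q e = q →
          Reach act p q →
          ∀ s : S, (Reach act (act p s) q ↔ Reach act (act q s) q)) ∧
       (∀ (p q r : Q) (e : S), e * e = e →
          act p e = p → act q e = q → act r e = r →
          ∀ s t : S, s = e * s * e → t = e * t * e →
            act p s = q → act r s = r → act p t = r → act q t = q →
            r = q)) := by
  constructor
  · rintro ⟨hli, hlaw⟩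
    refine ⟨hli, ?_, ?_⟩
    · -- condition (2)
      intro p q e he hpe hqe hreach s
      rcases hreach with heq | ⟨u₀, hu₀⟩
      · subst heq; exact Iff.rfl
      · have fixmul : ∀ (z : Q) (x : S), act z e = z → act z (e * x) = act z x :=
          fun z x hz => by rw [← hact, hz]
        have hu : act p (e * u₀ * e) = q := by
          rw [mul_assoc, fixmul p _ hpe, ← hact, hu₀, hqe]
        have huu : (e * u₀ * e) * (e * u₀ * e) = e * u₀ * e := hli e u₀ he
        have hqu : act q (e * u₀ * e) = q := by
          conv_lhs => rw [← hu]
          rw [hact, huu, hu]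
        have stepP : ∀ v₀ : S,
            act p (e * v₀ * e * (e * u₀ * e)) = act q (e * v₀ * e * (e * u₀ * e)) := by
          intro v₀
          conv_rhs => rw [← hu]
          rw [hact,
            show (e * u₀ * e) * (e * v₀ * e * (e * u₀ * e))
              = (e * u₀ * e) * (e * v₀ * e) * (e * u₀ * e) from (mul_assoc _ _ _).symm,
            hlaw e u₀ v₀ he]
        have hv_of : ∀ (z : Q), act z e = z → ∀ x : S, act z x = q →
            act z (e * x * e) = q :=
          fun z hz x hx => by rw [mul_assoc, fixmul z _ hz, ← hact, hx, hqe]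
        have claimC : ∀ v₀ : S, act p (e * v₀ * e) = q →
            act q (e * v₀ * e * (e * u₀ * e)) = q := by
          intro v₀ hv
          rw [← stepP v₀, ← hact, hv, hqu]
        have claimB : ∀ v₀ : S, act q (e * v₀ * e) = q →
            act p (e * v₀ * e * (e * u₀ * e)) = q := by
          intro v₀ hv
          rw [stepP v₀, ← hact, hv, hqu]
        constructor
        · rintro (hps | ⟨w, hw⟩)
          · refine Or.inr ⟨e * (e * u₀ * e), ?_⟩
            calc act (act q s) (e * (e * u₀ * e))
                = act q (s * (e * (e * u₀ * e))) := hact q s _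
              _ = act q (e * (s * (e * (e * u₀ * e)))) := (fixmul q _ hqe).symm
              _ = act q (e * s * e * (e * u₀ * e)) := by simp only [mul_assoc]
              _ = q := claimC s (hv_of p hpe s hps)
          · refine Or.inr ⟨w * (e * (e * u₀ * e)), ?_⟩
            have hsw : act p (s * w) = q := by rw [← hact]; exact hw
            calc act (act q s) (w * (e * (e * u₀ * e)))
                = act q (s * (w * (e * (e * u₀ * e)))) := hact q s _
              _ = act q (e * (s * (w * (e * (e * u₀ * e))))) := (fixmul q _ hqe).symm
              _ = act q (e * (s * w) * e * (e * u₀ * e)) := by simp only [mul_assoc]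
              _ = q := claimC (s * w) (hv_of p hpe (s * w) hsw)
        · rintro (hqs | ⟨w, hw⟩)
          · refine Or.inr ⟨e * (e * u₀ * e), ?_⟩
            calc act (act p s) (e * (e * u₀ * e))
                = act p (s * (e * (e * u₀ * e))) := hact p s _
              _ = act p (e * (s * (e * (e * u₀ * e)))) := (fixmul p _ hpe).symm
              _ = act p (e * s * e * (e * u₀ * e)) := by simp only [mul_assoc]
              _ = q := claimB s (hv_of q hqe s hqs)
          · refine Or.inr ⟨w * (e * (e * u₀ * e)), ?_⟩
            have hsw : act q (s * w) = q := by rw [← hact]; exact hw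
            calc act (act p s) (w * (e * (e * u₀ * e)))
                = act p (s * (w * (e * (e * u₀ * e)))) := hact p s _
              _ = act p (e * (s * (w * (e * (e * u₀ * e))))) := (fixmul p _ hpe).symm
              _ = act p (e * (s * w) * e * (e * u₀ * e)) := by simp only [mul_assoc]
              _ = q := claimB (s * w) (hv_of q hqe (s * w) hsw)
    · -- condition (3)
      intro p q r e he hpe hqe hre s t hs ht hps hrs hpt hqt
      have hss : s * s = s := by
        have h := hli e s he; rw [← hs] at h; exact h
      have hsts : s * t * s = t * s := by
        have h := hlaw e s t he; rw [← hs, ← ht] at h; exact h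
      calc r = act r s := hrs.symm
        _ = act (act p t) s := by rw [hpt]
        _ = act p (t * s) := hact p t s
        _ = act p (s * t * s) := by rw [hsts]
        _ = act p (s * (t * s)) := by rw [mul_assoc]
        _ = act (act p s) (t * s) := (hact p s (t * s)).symm
        _ = act q (t * s) := by rw [hps]
        _ = act (act q t) s := (hact q t s).symm
        _ = act q s := by rw [hqt]
        _ = act (act p s) s := by rw [hps]
        _ = act p (s * s) := hact p s s
        _ = act p s := by rw [hss]
        _ = q := hps
  · rintro ⟨hli, _h2, h3⟩
    refine ⟨hli, ?_⟩
    intro e a b he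
    apply hfaith
    intro q
    have hee' : ∀ z : S, e * (e * z) = e * z := fun z => by rw [← mul_assoc, he]
    have eMul : ∀ c d : S, (e * c * e) * (e * d * e) = e * (c * e * d) * e :=
      fun c d => by simp only [mul_assoc, hee']
    have eece : ∀ c : S, e * (e * c * e) = e * c * e := fun c => by
      simp only [mul_assoc, hee']
    have ecee : ∀ c : S, (e * c * e) * e = e * c * e := fun c => by
      simp only [mul_assoc, he]
    have hxx : (e * a * e) * (e * a * e) = e * a * e := hli e a he
    have hyxr : (e * b * e) * (e * a * e) = e * (b * e * a) * e := eMul b a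
    have hxyx : (e * a * e) * (e * b * e) * (e * a * e) = e * (a * e * b * e * a) * e := by
      rw [eMul a b, eMul (a * e * b) a]
    have hyxyx : (e * (b * e * a) * e) * (e * (b * e * a) * e) = e * (b * e * a) * e :=
      hli e (b * e * a) he
    have h1 : ((e * b * e) * (e * a * e)) * ((e * a * e) * (e * b * e) * (e * a * e))
        = (e * b * e) * (e * a * e) := by
      have e1 : ((e * b * e) * (e * a * e)) * ((e * a * e) * (e * b * e) * (e * a * e))
          = (e * b * e) * (((e * a * e) * (e * a * e)) * ((e * b * e) * (e * a * e))) := by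
        simp only [mul_assoc]
      rw [e1, hxx]
      have e2 : (e * b * e) * ((e * a * e) * ((e * b * e) * (e * a * e)))
          = ((e * b * e) * (e * a * e)) * ((e * b * e) * (e * a * e)) := by
        simp only [mul_assoc]
      rw [e2, hyxr, hyxyx]
    have h2 : (e * a * e) * (e * b * e) * (e * a * e) * ((e * b * e) * (e * a * e))
        = (e * a * e) * (e * b * e) * (e * a * e) := by
      have e1 : (e * a * e) * (e * b * e) * (e * a * e) * ((e * b * e) * (e * a * e))
          = (e * a * e) * (((e * b * e) * (e * a * e)) * ((e * b * e) * (e * a * e))) := by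
        simp only [mul_assoc]
      rw [e1, hyxr, hyxyx, ← hyxr]
      simp only [mul_assoc]
    have hsform : (e * a * e) * (e * b * e) * (e * a * e)
        = e * ((e * a * e) * (e * b * e) * (e * a * e)) * e := by
      rw [hxyx, eece, ecee]
    have htform : (e * b * e) * (e * a * e) = e * ((e * b * e) * (e * a * e)) * e := by
      rw [hyxr, eece, ecee]
    have hpe' : act (act q e) e = act q e := by rw [hact, he]
    have hqe' : act (act q ((e * a * e) * (e * b * e) * (e * a * e))) e
        = act q ((e * a * e) * (e * b * e) * (e * a * e)) := by
      rw [hact, hxyx, ecee]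
    have hre' : act (act q ((e * b * e) * (e * a * e))) e
        = act q ((e * b * e) * (e * a * e)) := by
      rw [hact, hyxr, ecee]
    have hps' : act (act q e) ((e * a * e) * (e * b * e) * (e * a * e))
        = act q ((e * a * e) * (e * b * e) * (e * a * e)) := by
      rw [hact, hxyx, eece]
    have hrs' : act (act q ((e * b * e) * (e * a * e)))
        ((e * a * e) * (e * b * e) * (e * a * e))
        = act q ((e * b * e) * (e * a * e)) := by
      rw [hact, h1]
    have hpt' : act (act q e) ((e * b * e) * (e * a * e))
        = act q ((e * b * e) * (e * a * e)) := by
      rw [hact, hyxr, eece]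
    have hqt' : act (act q ((e * a * e) * (e * b * e) * (e * a * e)))
        ((e * b * e) * (e * a * e))
        = act q ((e * a * e) * (e * b * e) * (e * a * e)) := by
      rw [hact, h2]
    exact (h3 (act q e) (act q ((e * a * e) * (e * b * e) * (e * a * e)))
      (act q ((e * b * e) * (e * a * e))) e he hpe' hqe' hre'
      ((e * a * e) * (e * b * e) * (e * a * e)) ((e * b * e) * (e * a * e))
      hsform htform hps' hrs' hpt' hqt').symm
end

section
/- Let S be a finite semigroup. Then S is right locally testable (i.e., locally idempotent and locally satisfying xyx = xy) if and only if S is locally idempotent and no two distinct idempotents e, i lying in a common right-zero subsemigroup of S (i.e., with e·i = i and i·e = e) have a common right unit in S. -/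
private lemma aux14 {S : Type*} [Semigroup S] (x y e : S)
    (hu : (x * y) * (x * y) = x * y)
    (hw : (x * y * x) * (x * y * x) = x * y * x)
    (hx : x * x = x)
    (he : e * e = e) (hxe : x * e = x) (hye : y * e = y)
    (hno : ¬ ∃ e i f : S, e ≠ i ∧ e * e = e ∧ i * i = i ∧ e * i = i ∧ i * e = e ∧
          f * f = f ∧ e * f = e ∧ i * f = i) :
    x * y * x = x * y := by
  by_contra hne
  apply hno
  refine ⟨x * y * x, x * y, e, hne, hw, hu, ?_, ?_, he, ?_, ?_⟩
  · calc (x * y * x) * (x * y) = (x * y) * ((x * x) * y) := by simp only [mul_assoc]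
      _ = (x * y) * (x * y) := by rw [hx]
      _ = x * y := hu
  · calc (x * y) * (x * y * x) = ((x * y) * (x * y)) * x := by simp only [mul_assoc]
      _ = x * y * x := by rw [hu]
  · rw [mul_assoc, hxe]
  · rw [mul_assoc, hye]

theorem stmt14 {S : Type*} [Semigroup S] [Fintype S] :
    (LocIdem S ∧ LocXYXeqXY S) ↔
      (LocIdem S ∧
        ¬ ∃ e i f : S, e ≠ i ∧ e * e = e ∧ i * i = i ∧ e * i = i ∧ i * e = e ∧
          f * f = f ∧ e * f = e ∧ i * f = i) := by
  constructor
  · rintro ⟨hLI, hXYX⟩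
    refine ⟨hLI, ?_⟩
    rintro ⟨e, i, f, hne, he, hi, hei, hie, hf, hef, hif⟩
    apply hne
    have key := hXYX f e i hf
    have hA : e * (f * e * f) = e := by
      rw [← mul_assoc, ← mul_assoc, hef, he, hef]
    have hB : e * (f * i * f) = i := by
      rw [← mul_assoc, ← mul_assoc, hef, hei, hif]
    have hiA : i * (f * e * f) = e := by
      rw [← mul_assoc, ← mul_assoc, hif, hie, hef]
    have hR : e * ((f * e * f) * (f * i * f)) = i := by
      rw [← mul_assoc, hA, hB]
    have hL : e * ((f * e * f) * (f * i * f) * (f * e * f)) = e := by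
      calc e * ((f * e * f) * (f * i * f) * (f * e * f))
          = ((e * (f * e * f)) * (f * i * f)) * (f * e * f) := by simp only [mul_assoc]
        _ = e := by rw [hA, hB, hiA]
    exact hL.symm.trans (by rw [key, hR])
  · rintro ⟨hLI, hno⟩
    refine ⟨hLI, ?_⟩
    intro e a b he
    have hx : (e * a * e) * (e * a * e) = e * a * e := hLI e a he
    have hu : ((e * a * e) * (e * b * e)) * ((e * a * e) * (e * b * e))
        = (e * a * e) * (e * b * e) := by
      have h := hLI e (a * e * e * b) he
      have h' : e * (a * e * e * b) * e = (e * a * e) * (e * b * e) := by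
        simp only [mul_assoc]
      rwa [h'] at h
    have hw : ((e * a * e) * (e * b * e) * (e * a * e)) *
        ((e * a * e) * (e * b * e) * (e * a * e))
        = (e * a * e) * (e * b * e) * (e * a * e) := by
      have h := hLI e (a * e * e * b * e * e * a) he
      have h' : e * (a * e * e * b * e * e * a) * e
          = (e * a * e) * (e * b * e) * (e * a * e) := by
        simp only [mul_assoc]
      rwa [h'] at h
    have hxe : (e * a * e) * e = e * a * e := by rw [mul_assoc, he]
    have hye : (e * b * e) * e = e * b * e := by rw [mul_assoc, he]
    exact aux14 (e * a * e) (e * b * e) e hu hw hx he hxe hye hno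
end

section
/- Let S be a finite semigroup. Then S is left locally testable (locally idempotent and locally satisfying xyx = yx) if and only if S is locally idempotent and no two distinct idempotents e, i lying in a common left-zero subsemigroup of S (i.e., with e·i = e and i·e = i) have a common left unit in S (an idempotent f with f·e = e and f·i = i). -/
theorem stmt15 {S : Type*} [Semigroup S] [Fintype S] :
    (LocIdem S ∧ LocXYXeqYX S) ↔
      (LocIdem S ∧
        ¬ ∃ e i f : S, e ≠ i ∧ e * e = e ∧ i * i = i ∧ e * i = e ∧ i * e = i ∧
          f * f = f ∧ f * e = e ∧ f * i = i) := by
  constructor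
  · rintro ⟨hI, hX⟩
    refine ⟨hI, ?_⟩
    rintro ⟨e, i, f, hne, he, hi, hei, hie, hf, hfe, hfi⟩
    have he' : ∀ x : S, e * (e * x) = e * x := fun x => by rw [← mul_assoc, he]
    have hei' : ∀ x : S, e * (i * x) = e * x := fun x => by rw [← mul_assoc, hei]
    have hie' : ∀ x : S, i * (e * x) = i * x := fun x => by rw [← mul_assoc, hie]
    have hfe' : ∀ x : S, f * (e * x) = e * x := fun x => by rw [← mul_assoc, hfe]
    have hfi' : ∀ x : S, f * (i * x) = i * x := fun x => by rw [← mul_assoc, hfi]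
    have key := hX f e i hf
    simp only [mul_assoc] at key
    simp only [hfe', hfi', hei', hie', he'] at key
    -- key : e * f = i * f
    have h3 : e * (f * e) = i * (f * e) := by rw [← mul_assoc, key, mul_assoc]
    rw [hfe, he, hie] at h3
    exact hne h3
  · rintro ⟨hI, hno⟩
    refine ⟨hI, ?_⟩
    intro f a b hf
    have hf' : ∀ s : S, f * (f * s) = f * s := fun s => by rw [← mul_assoc, hf]
    have hx : (f * a * f) * (f * a * f) = f * a * f := hI f a hf
    have hyx : ((f * b * f) * (f * a * f)) * ((f * b * f) * (f * a * f)) =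
        (f * b * f) * (f * a * f) := by
      simpa [mul_assoc] using hI f (b * f * f * a) hf
    by_contra hne
    apply hno
    refine ⟨(f * a * f) * (f * b * f) * (f * a * f), (f * b * f) * (f * a * f), f,
      hne, ?_, ?_, ?_, ?_, hf, ?_, ?_⟩
    · simpa [mul_assoc] using hI f (a * f * f * b * f * f * a) hf
    · simpa [mul_assoc] using hI f (b * f * f * a) hf
    · calc (f * a * f) * (f * b * f) * (f * a * f) * ((f * b * f) * (f * a * f))
          = (f * a * f) * (((f * b * f) * (f * a * f)) * ((f * b * f) * (f * a * f))) := by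
            simp [mul_assoc]
        _ = (f * a * f) * ((f * b * f) * (f * a * f)) := by rw [hyx]
        _ = (f * a * f) * (f * b * f) * (f * a * f) := by simp [mul_assoc]
    · calc (f * b * f) * (f * a * f) * ((f * a * f) * (f * b * f) * (f * a * f))
          = (f * b * f) * (((f * a * f) * (f * a * f)) * ((f * b * f) * (f * a * f))) := by
            simp [mul_assoc]
        _ = (f * b * f) * ((f * a * f) * ((f * b * f) * (f * a * f))) := by rw [hx]
        _ = ((f * b * f) * (f * a * f)) * ((f * b * f) * (f * a * f)) := by simp [mul_assoc]
        _ = (f * b * f) * (f * a * f) := hyx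
    · simp only [mul_assoc, hf']
    · simp only [mul_assoc, hf']
end
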